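/- For any convex body K in ℝ^d and any two vectors x₁, x₂, the translates x₁ + K and x₂ + K touch (i.e., intersect but have disjoint interiors) if and only if x₁ + K₀ and x₂ + K₀ touch, where K₀ = (1/2)(K − K) is the Minkowski symmetrization of K. -/

import Mathlib

open scoped Pointwise

open Set

/-- Translates intersect iff the difference of translation vectors lies in `A - B`. -/
lemma translate_inter_nonempty_iff {E : Type*} [AddCommGroup E] (A B : Set E) (x₁ x₂ : E) :
    ((x₁ +ᵥ A) ∩ (x₂ +ᵥ B)).Nonempty ↔ x₂ - x₁ ∈ A - B := by
  constructor
  · rintro ⟨p, ⟨a, ha, rfl⟩, ⟨b, hb, hp⟩⟩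
    refine ⟨a, ha, b, hb, sub_eq_sub_iff_add_eq_add.mpr ?_⟩
    simp only [vadd_eq_add] at hp
    rw [hp]; abel
  · rintro ⟨a, ha, b, hb, hab⟩
    have h := sub_eq_sub_iff_add_eq_add.mp hab
    refine ⟨x₁ + a, ⟨a, ha, rfl⟩, ⟨b, hb, ?_⟩⟩
    simp only [vadd_eq_add]
    rw [← h]; abel

lemma translate_disjoint_iff {E : Type*} [AddCommGroup E] (A B : Set E) (x₁ x₂ : E) :
    Disjoint (x₁ +ᵥ A) (x₂ +ᵥ B) ↔ x₂ - x₁ ∉ A - B := by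
  rw [Set.disjoint_iff_inter_eq_empty, ← not_nonempty_iff_eq_empty,
    translate_inter_nonempty_iff]

/-- Key convexity lemma: interior of a sum is contained in the sum of interiors. -/
lemma interior_add_subset_key {E : Type*} [NormedAddCommGroup E] [NormedSpace ℝ E]
    {A B : Set E} (hA : Convex ℝ A) (hB : Convex ℝ B)
    (ha : (interior A).Nonempty) (hb : (interior B).Nonempty) :
    interior (A + B) ⊆ interior A + interior B := by
  obtain ⟨a₀, ha₀⟩ := ha
  obtain ⟨b₀, hb₀⟩ := hb
  intro x hx
  set c₀ := a₀ + b₀ with hc₀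
  have hf : ContinuousAt (fun ε : ℝ => x + ε • (x - c₀)) 0 := by fun_prop
  have h0 : (fun ε : ℝ => x + ε • (x - c₀)) 0 = x := by simp
  have h1 : ∀ᶠ ε in nhds (0 : ℝ), x + ε • (x - c₀) ∈ A + B := by
    have := hf.eventually_mem (h0 ▸ isOpen_interior.mem_nhds hx)
    exact this.mono fun ε hε => interior_subset hε
  have h2 : ∀ᶠ ε in nhdsWithin (0 : ℝ) (Set.Ioi 0),
      x + ε • (x - c₀) ∈ A + B ∧ 0 < ε :=
    (h1.filter_mono nhdsWithin_le_nhds).and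
      (eventually_mem_nhdsWithin.mono fun ε hε => hε)
  obtain ⟨ε, hmem, hεpos⟩ := h2.exists
  obtain ⟨a', ha', b', hb', hab⟩ := hmem
  have hεpos : (0 : ℝ) < ε := hεpos
  set lam : ℝ := 1 / (1 + ε) with hlam
  have h1ε : (0 : ℝ) < 1 + ε := by linarith
  have hlam0 : 0 < lam := by positivity
  have hlam1 : lam < 1 := by
    rw [hlam, div_lt_one h1ε]; linarith
  have hb'eq : b' = x + ε • (x - c₀) - a' := eq_sub_of_add_eq' hab
  subst hb'eq
  have hxa : x = ((1 - lam) • a₀ + lam • a') +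
      ((1 - lam) • b₀ + lam • (x + ε • (x - c₀) - a')) := by
    rw [hc₀, hlam]
    match_scalars
    · field_simp
    · field_simp; ring
    · field_simp; ring
    · field_simp; ring
  rw [hxa]
  exact ⟨(1 - lam) • a₀ + lam • a',
    hA.combo_interior_self_mem_interior ha₀ ha' (by linarith) hlam0.le (by ring),
    (1 - lam) • b₀ + lam • (x + ε • (x - c₀) - a'),
    hB.combo_interior_self_mem_interior hb₀ hb' (by linarith) hlam0.le (by ring), rfl⟩

/-- Minkowski's lemma (touching part): two translates of a convex body `K` touch
(intersect with disjoint interiors) iff the corresponding translates of the Minkowski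
symmetrization `K₀ = (1/2)(K - K)` touch. -/
theorem translates_touch_iff_minkowskiSym {d : ℕ}
    (K : Set (EuclideanSpace ℝ (Fin d)))
    (hconv : Convex ℝ K) (hcomp : IsCompact K) (hint : (interior K).Nonempty)
    (x₁ x₂ : EuclideanSpace ℝ (Fin d)) :
    (((x₁ +ᵥ K) ∩ (x₂ +ᵥ K)).Nonempty ∧
        Disjoint (interior (x₁ +ᵥ K)) (interior (x₂ +ᵥ K))) ↔
      (((x₁ +ᵥ (2⁻¹ : ℝ) • (K - K)) ∩ (x₂ +ᵥ (2⁻¹ : ℝ) • (K - K))).Nonempty ∧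
        Disjoint (interior (x₁ +ᵥ (2⁻¹ : ℝ) • (K - K)))
          (interior (x₂ +ᵥ (2⁻¹ : ℝ) • (K - K)))) := by
  set D : Set (EuclideanSpace ℝ (Fin d)) := K - K with hD
  have hDconv : Convex ℝ D := hconv.sub hconv
  have hInegK : ∀ s : Set (EuclideanSpace ℝ (Fin d)), interior (-s) = -interior s := by
    intro s
    have h := (Homeomorph.neg (EuclideanSpace ℝ (Fin d))).preimage_interior s
    simpa [Set.neg_preimage] using h.symm
  have hKneg_int : (interior (-K)).Nonempty := by
    obtain ⟨a, ha⟩ := hint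
    exact ⟨-a, by rw [hInegK]; exact Set.neg_mem_neg.mpr ha⟩
  -- -D = D
  have hDsymm : -D = D := by
    ext y
    simp only [Set.mem_neg, hD, Set.mem_sub]
    constructor
    · rintro ⟨a, ha, b, hb, hab⟩
      exact ⟨b, hb, a, ha, by rw [← neg_sub a b, hab, neg_neg]⟩
    · rintro ⟨a, ha, b, hb, hab⟩
      exact ⟨b, hb, a, ha, by rw [← neg_sub a b, hab]⟩
  -- interior D is symmetric
  have hintDsymm : -interior D = interior D := by
    rw [← hInegK, hDsymm]
  -- Bridge: interior K - interior K = interior D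
  have hbridge : interior K - interior K = interior D := by
    apply Subset.antisymm
    · have hopen : IsOpen (interior K - interior K) :=
        IsOpen.sub_left isOpen_interior
      exact interior_maximal (sub_subset_sub interior_subset interior_subset) hopen
    · have h1 : interior D = interior (K + (-K)) := by rw [hD, sub_eq_add_neg]
      rw [h1]
      refine (interior_add_subset_key hconv (hconv.neg) hint hKneg_int).trans ?_
      rw [hInegK, sub_eq_add_neg]
    -- done
  -- K₀ - K₀ = D
  have hK0sub : (2⁻¹ : ℝ) • D - (2⁻¹ : ℝ) • D = D := by
    rw [sub_eq_add_neg, ← Set.smul_set_neg, hDsymm,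
      ← hDconv.add_smul (by norm_num : (0:ℝ) ≤ 2⁻¹) (by norm_num : (0:ℝ) ≤ 2⁻¹)]
    norm_num
  -- interior K₀ - interior K₀ = interior D
  have hintDconv : Convex ℝ (interior D) := hDconv.interior
  have hK0int : interior ((2⁻¹ : ℝ) • D) = (2⁻¹ : ℝ) • interior D := by
    exact interior_smul₀ (by norm_num) D
  have hK0intsub : interior ((2⁻¹ : ℝ) • D) - interior ((2⁻¹ : ℝ) • D) = interior D := by
    rw [hK0int, sub_eq_add_neg, ← Set.smul_set_neg, hintDsymm,
      ← hintDconv.add_smul (by norm_num : (0:ℝ) ≤ 2⁻¹) (by norm_num : (0:ℝ) ≤ 2⁻¹)]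
    norm_num
  -- Now rewrite both sides
  simp only [interior_vadd]
  rw [translate_inter_nonempty_iff, translate_disjoint_iff,
    translate_inter_nonempty_iff, translate_disjoint_iff,
    hbridge, hK0sub, hK0intsub]
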